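/- Let p ≥ 2, let n be an even positive integer, and let x, y ∈ V_{p,n}^A. Put a = T_{A→R}(x) and b = T_{A→R}(y). Then x ~^A y if and only if a ~ b. -/
import Mathlib


open scoped Classical

/-- Tuples over `ZMod p` of arbitrary length (`U_p` lives among these). -/
abbrev DehnTuple (p : ℕ) := Σ n : ℕ, Fin n → ZMod p

/-- (Op1): cyclic shift `(a_1,…,a_n) → (a_2,…,a_n,a_1)`. -/
def dOp1 {p n : ℕ} (hn : 0 < n) (a : Fin n → ZMod p) : Fin n → ZMod p :=
  fun i => a ⟨(i.1 + 1) % n, Nat.mod_lt _ hn⟩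

/-- (Op2): `(a_1,…,a_n) → (x, a_2+(-1)^2(a_1-x), …, a_n+(-1)^n(a_1-x))`. -/
def dOp2 {p n : ℕ} (hn : 0 < n) (x : ZMod p) (a : Fin n → ZMod p) : Fin n → ZMod p :=
  fun i => a i + (-1 : ZMod p) ^ (i.1 + 1) * (a ⟨0, hn⟩ - x)

/-- (Op3): `(a_1,…,a_n) → (x, a_1-a_2+x, …, a_1-a_n+x)`. -/
def dOp3 {p n : ℕ} (hn : 0 < n) (x : ZMod p) (a : Fin n → ZMod p) : Fin n → ZMod p :=
  fun i => a ⟨0, hn⟩ - a i + x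

/-- (Op4): `(a_1,…,a_n) → (a_1, -a_1+a_2+a_3, a_3, …, a_n)` (needs `n > 2`). -/
def dOp4 {p n : ℕ} (hn : 2 < n) (a : Fin n → ZMod p) : Fin n → ZMod p :=
  fun i => if i.1 = 1 then -a ⟨0, by omega⟩ + a ⟨1, by omega⟩ + a ⟨2, hn⟩ else a i

/-- A single transformation (Op1)–(Op4) on tuples in `U_p`
(tuples of even positive length). -/
inductive DehnStep (p : ℕ) : DehnTuple p → DehnTuple p → Prop
  | op1 {n : ℕ} (hn : 0 < n) (he : Even n) (a : Fin n → ZMod p) :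
      DehnStep p ⟨n, a⟩ ⟨n, dOp1 hn a⟩
  | op2 {n : ℕ} (hn : 0 < n) (he : Even n) (x : ZMod p) (a : Fin n → ZMod p) :
      DehnStep p ⟨n, a⟩ ⟨n, dOp2 hn x a⟩
  | op3 {n : ℕ} (hn : 0 < n) (he : Even n) (x : ZMod p) (a : Fin n → ZMod p) :
      DehnStep p ⟨n, a⟩ ⟨n, dOp3 hn x a⟩
  | op4 {n : ℕ} (hn : 2 < n) (he : Even n) (a : Fin n → ZMod p) :
      DehnStep p ⟨n, a⟩ ⟨n, dOp4 hn a⟩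

/-- `a ~ b`: related by a finite sequence of the transformations (Op1)–(Op4). -/
def DehnEquiv (p : ℕ) : DehnTuple p → DehnTuple p → Prop :=
  Relation.ReflTransGen (DehnStep p)

/-- An `R`-palette for Dehn `p`-colorings: a set of tuples closed under the
operations (i)–(iv). -/
def IsRPalette (p : ℕ) (P : Set (DehnTuple p)) : Prop :=
  (∀ {n : ℕ} (hn : 0 < n) (a : Fin n → ZMod p),
      (⟨n, a⟩ : DehnTuple p) ∈ P → (⟨n, dOp1 hn a⟩ : DehnTuple p) ∈ P) ∧
  (∀ {n : ℕ} (hn : 0 < n) (x : ZMod p) (a : Fin n → ZMod p),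
      (⟨n, a⟩ : DehnTuple p) ∈ P → (⟨n, dOp2 hn x a⟩ : DehnTuple p) ∈ P) ∧
  (∀ {n : ℕ} (hn : 0 < n) (x : ZMod p) (a : Fin n → ZMod p),
      (⟨n, a⟩ : DehnTuple p) ∈ P → (⟨n, dOp3 hn x a⟩ : DehnTuple p) ∈ P) ∧
  (∀ {n : ℕ} (hn : 2 < n) (a : Fin n → ZMod p),
      (⟨n, a⟩ : DehnTuple p) ∈ P → (⟨n, dOp4 hn a⟩ : DehnTuple p) ∈ P)

/-- The alternating set `A_p`: tuples of even positive length of the form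
`(x, y, x, y, …, x, y)`. -/
def altSet (p : ℕ) : Set (DehnTuple p) :=
  {t | 0 < t.1 ∧ Even t.1 ∧
    ∃ x y : ZMod p, ∀ i : Fin t.1, t.2 i = if Even i.1 then x else y}

/-- The cyclic consecutive sums `a_i + a_{i+1}` of integer representatives. -/
def cycS {p n : ℕ} (hn : 0 < n) (a : Fin n → ZMod p) (i : Fin n) : ℕ :=
  (a i).val + (a ⟨(i.1 + 1) % n, Nat.mod_lt _ hn⟩).val

/-- `τ_p(a)`: the largest `k ∈ {1,…,p}` dividing `p` such that all cyclic
consecutive sums are congruent mod `k`. -/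
noncomputable def tauInv (p : ℕ) {n : ℕ} (hn : 0 < n) (a : Fin n → ZMod p) : ℕ :=
  sSup {k : ℕ | 0 < k ∧ k ∣ p ∧ ∀ i j : Fin n, cycS hn a i ≡ cycS hn a j [MOD k]}

/-- `ε_p(a)`: `0` if all cyclic consecutive sums are even, `1` if all are odd,
`∞` otherwise. -/
noncomputable def epsInv (p : ℕ) {n : ℕ} (hn : 0 < n) (a : Fin n → ZMod p) : WithTop ℕ :=
  if ∀ i, Even (cycS hn a i) then 0
  else if ∀ i, Odd (cycS hn a i) then 1
  else ⊤

/-- `μ_p(a) = E(a) - O(a)`. -/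
noncomputable def muInv (p : ℕ) {n : ℕ} (hn : 0 < n) (a : Fin n → ZMod p) : ℤ :=
  ((Finset.univ.filter fun i : Fin n => Even (cycS hn a i)).card : ℤ) -
  ((Finset.univ.filter fun i : Fin n => Odd (cycS hn a i)).card : ℤ)

/-- The reduced tuple `b ∈ (Z_{p/τ})^n` with `b_{2j-1} = (a_{2j-1}-a_1)/τ`,
`b_{2j} = (a_{2j}-a_2)/τ` (differences of integer representatives). -/
noncomputable def reducedTuple (p : ℕ) {n : ℕ} (hn1 : 1 < n) (τ : ℕ) (a : Fin n → ZMod p) :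
    Fin n → ZMod (p / τ) :=
  fun i =>
    (((((a i).val : ℤ) -
        (if Even i.1 then ((a ⟨0, by omega⟩).val : ℤ) else ((a ⟨1, hn1⟩).val : ℤ))) /
      (τ : ℤ) : ℤ) : ZMod (p / τ))

/-- `μ_{p,τ}(a)`: `|μ_{p/τ}(b)|` if `τ_p(a) = τ`, and `∞` otherwise. -/
noncomputable def muTauInv (p : ℕ) {n : ℕ} (hn1 : 1 < n) (τ : ℕ) (a : Fin n → ZMod p) :
    WithTop ℤ :=
  if tauInv p (by omega) a = τ then
    ((|muInv (p / τ) (by omega) (reducedTuple p hn1 τ a)| : ℤ) : WithTop ℤ)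
  else ⊤

/-- The entry at (0-indexed) position `k` of the canonical tuple
`(0, 0, τ, -τ, 2τ, -2τ, …)`. -/
def pairPat (p τ k : ℕ) : ZMod p :=
  if Even k then ((k / 2 : ℕ) : ZMod p) * (τ : ZMod p)
  else -(((k / 2 : ℕ) : ZMod p) * (τ : ZMod p))

/-- The alternating sum `Σ_{i=1}^n (-1)^i x_i` in `ZMod p`. -/
def altSum (p n : ℕ) (x : Fin n → ZMod p) : ZMod p :=
  ∑ i : Fin n, (-1 : ZMod p) ^ (i.1 + 1) * x i

/-- `T_{R→A}(a_1,…,a_n) = (a_1+a_2, a_2+a_3, …, a_{n-1}+a_n, a_n+a_1)`. -/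
def traMap (p : ℕ) {n : ℕ} (hn : 0 < n) (a : Fin n → ZMod p) : Fin n → ZMod p :=
  fun i => a i + a ⟨(i.1 + 1) % n, Nat.mod_lt _ hn⟩

/-- `T_{A→R}(x_1,…,x_n) = (0, c_2, …, c_n)`, `c_j = Σ_{i=1}^{j-1} (-1)^{i+(j-1)} x_i`. -/
def tarMap (p n : ℕ) (x : Fin n → ZMod p) : Fin n → ZMod p :=
  fun k => ∑ i : Fin n, if i.1 < k.1 then (-1 : ZMod p) ^ (i.1 + k.1 + 1) * x i else 0

/-- A single transformation (Op1)^A–(Op3)^A on arc-color tuples. -/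
inductive AStep (p n : ℕ) : (Fin n → ZMod p) → (Fin n → ZMod p) → Prop
  | op1 (hn : 0 < n) (x : Fin n → ZMod p) :
      AStep p n x (fun i => x ⟨(i.1 + 1) % n, Nat.mod_lt _ hn⟩)
  | op2 (c : ZMod p) (x : Fin n → ZMod p) :
      AStep p n x (fun i => 2 * c - x i)
  | op3 (hn : 1 < n) (x : Fin n → ZMod p) :
      AStep p n x (fun i =>
        if i.1 = 0 then x ⟨1, hn⟩
        else if i.1 = 1 then 2 * x ⟨1, hn⟩ - x ⟨0, by omega⟩
        else x i)

/-- `x ~^A y`: related by a finite sequence of (Op1)^A–(Op3)^A. -/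
def AEquiv (p n : ℕ) : (Fin n → ZMod p) → (Fin n → ZMod p) → Prop :=
  Relation.ReflTransGen (AStep p n)

/-- `τ_p^A(x)`: the largest `k ∈ {1,…,p}` dividing `p` with all entries
congruent mod `k`. -/
noncomputable def tauA (p n : ℕ) (x : Fin n → ZMod p) : ℕ :=
  sSup {k : ℕ | 0 < k ∧ k ∣ p ∧ ∀ i j : Fin n, (x i).val ≡ (x j).val [MOD k]}

section Aux

variable {p n : ℕ}

lemma neg_one_pow_mod (he : Even n) (k : ℕ) :
    (-1 : ZMod p) ^ (k % n) = (-1 : ZMod p) ^ k := by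
  rcases Nat.even_or_odd k with h | h
  · have h2 : Even (k % n) := by
      rw [Nat.even_iff] at h ⊢
      rw [Nat.mod_mod_of_dvd k he.two_dvd]; exact h
    rw [h.neg_one_pow, h2.neg_one_pow]
  · have h2 : Odd (k % n) := by
      rw [Nat.odd_iff] at h ⊢
      rw [Nat.mod_mod_of_dvd k he.two_dvd]; exact h
    rw [h.neg_one_pow, h2.neg_one_pow]

lemma traMap_dOp1 (hn : 0 < n) (a : Fin n → ZMod p) :
    traMap p hn (dOp1 hn a) = fun i => traMap p hn a ⟨(i.1 + 1) % n, Nat.mod_lt _ hn⟩ := rfl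

lemma traMap_dOp2 (hn : 0 < n) (he : Even n) (z : ZMod p) (a : Fin n → ZMod p) :
    traMap p hn (dOp2 hn z a) = traMap p hn a := by
  funext i
  simp only [traMap, dOp2]
  have h1 : (-1 : ZMod p) ^ ((i.1 + 1) % n + 1) = -(-1 : ZMod p) ^ (i.1 + 1) := by
    rw [pow_succ, neg_one_pow_mod he]; ring
  rw [h1]; ring

lemma traMap_dOp3 (hn : 0 < n) (z : ZMod p) (a : Fin n → ZMod p) :
    traMap p hn (dOp3 hn z a) = fun i => 2 * (a ⟨0, hn⟩ + z) - traMap p hn a i := by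
  funext i; simp only [traMap, dOp3]; ring

lemma traMap_dOp4 (hn : 0 < n) (hn1 : 1 < n) (hn2 : 2 < n) (a : Fin n → ZMod p) :
    traMap p hn (dOp4 hn2 a) = fun i =>
      if i.1 = 0 then traMap p hn a ⟨1, hn1⟩
      else if i.1 = 1 then 2 * traMap p hn a ⟨1, hn1⟩ - traMap p hn a ⟨0, hn⟩
      else traMap p hn a i := by
  funext i
  obtain ⟨iv, hiv⟩ := i
  simp only [traMap, dOp4]
  have e1 : (1 : ℕ) % n = 1 := Nat.mod_eq_of_lt hn1
  have e2 : (2 : ℕ) % n = 2 := Nat.mod_eq_of_lt hn2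
  rcases Nat.lt_or_ge iv 2 with h2 | h2
  · interval_cases iv
    · norm_num
      simp only [e1, e2, if_true]
      ring
    · norm_num
      simp only [e1, e2]
      rw [if_neg (by omega : ¬(2 = 1))]
      ring
  · rcases Nat.lt_or_ge iv (n - 1) with hlt | hge
    · have e3 : (iv + 1) % n = iv + 1 := Nat.mod_eq_of_lt (by omega)
      simp only [e3]
      have : ¬ iv = 0 := by omega
      have : ¬ iv = 1 := by omega
      have : ¬ iv + 1 = 1 := by omega
      simp_all
    · have e4 : iv = n - 1 := by omega
      have e3 : (iv + 1) % n = 0 := by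
        have : iv + 1 = n := by omega
        rw [this, Nat.mod_self]
      simp only [e3]
      have : ¬ iv = 0 := by omega
      have : ¬ iv = 1 := by omega
      simp_all

lemma traMap_inj (hn : 0 < n) {b b' : Fin n → ZMod p}
    (h : traMap p hn b = traMap p hn b') (h0 : b ⟨0, hn⟩ = b' ⟨0, hn⟩) : b = b' := by
  have key : ∀ k, ∀ hk : k < n, b ⟨k, hk⟩ = b' ⟨k, hk⟩ := by
    intro k
    induction k with
    | zero => intro hk; exact h0
    | succ m ih =>
      intro hk
      have hm : m < n := by omega
      have ht := congrFun h ⟨m, hm⟩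
      simp only [traMap] at ht
      have e3 : (m + 1) % n = m + 1 := Nat.mod_eq_of_lt hk
      have efin : (⟨(m + 1) % n, Nat.mod_lt _ hn⟩ : Fin n) = ⟨m + 1, hk⟩ := by
        apply Fin.ext; simp [e3]
      rw [efin] at ht
      have := ih hm
      linear_combination ht - this
  funext i
  exact key i.1 i.2

lemma tarMap_zero (hn : 0 < n) (x : Fin n → ZMod p) : tarMap p n x ⟨0, hn⟩ = 0 := by
  simp [tarMap]

lemma dOp2_zero (hn : 0 < n) (z : ZMod p) (a : Fin n → ZMod p) :
    dOp2 hn z a ⟨0, hn⟩ = z := by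
  simp only [dOp2, pow_one]
  ring

lemma traMap_tarMap (hn : 0 < n) (he : Even n) {x : Fin n → ZMod p}
    (hx : altSum p n x = 0) : traMap p hn (tarMap p n x) = x := by
  funext k
  obtain ⟨kv, hkv⟩ := k
  simp only [traMap, tarMap]
  by_cases hlast : kv = n - 1
  · subst hlast
    have hmod : (n - 1 + 1) % n = 0 := by
      have h : n - 1 + 1 = n := by omega
      rw [h, Nat.mod_self]
    rw [hmod]
    simp only [Nat.not_lt_zero, if_false, Finset.sum_const_zero, add_zero]
    have step : (∑ i : Fin n, if i.1 < n - 1 then (-1 : ZMod p) ^ (i.1 + (n - 1) + 1) * x i else 0)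
        = (∑ i : Fin n, if i.1 < n - 1 then (-1 : ZMod p) ^ (i.1 + (n - 1) + 1) * x i else 0)
          + altSum p n x := by rw [hx, add_zero]
    rw [step, altSum, ← Finset.sum_add_distrib]
    have congr1 : ∀ i ∈ Finset.univ, ((if i.1 < n - 1 then (-1 : ZMod p) ^ (i.1 + (n - 1) + 1) * x i else 0)
        + (-1 : ZMod p) ^ (i.1 + 1) * x i) = if i = (⟨n - 1, hkv⟩ : Fin n) then x i else 0 := by
      intro i _
      by_cases hi : i.1 < n - 1
      · rw [if_pos hi, if_neg (by intro hh; rw [hh] at hi; simp at hi)]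
        have e : i.1 + (n - 1) + 1 = i.1 + n := by omega
        rw [e, pow_add, he.neg_one_pow, pow_succ]
        ring
      · have hie : i.1 = n - 1 := by omega
        rw [if_neg hi, if_pos (Fin.ext hie)]
        have e : i.1 + 1 = n := by omega
        rw [e, he.neg_one_pow]
        ring
    rw [Finset.sum_congr rfl congr1, Finset.sum_ite_eq' Finset.univ]
    simp
  · have hklt : kv + 1 < n := by omega
    have hmod : (kv + 1) % n = kv + 1 := Nat.mod_eq_of_lt hklt
    rw [hmod, ← Finset.sum_add_distrib]
    have congr1 : ∀ i ∈ Finset.univ, ((if i.1 < kv then (-1 : ZMod p) ^ (i.1 + kv + 1) * x i else 0)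
        + (if i.1 < kv + 1 then (-1 : ZMod p) ^ (i.1 + (kv + 1) + 1) * x i else 0))
        = if i = (⟨kv, hkv⟩ : Fin n) then x i else 0 := by
      intro i _
      rcases lt_trichotomy i.1 kv with hi | hi | hi
      · rw [if_pos hi, if_pos (by omega), if_neg (by intro hh; rw [hh] at hi; simp at hi)]
        have e : i.1 + (kv + 1) + 1 = (i.1 + kv + 1) + 1 := by omega
        rw [e, pow_succ]
        ring
      · rw [if_neg (by omega), if_pos (by omega), if_pos (Fin.ext hi)]
        have e : Even (i.1 + (kv + 1) + 1) := by
          rw [Nat.even_iff]; omega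
        rw [e.neg_one_pow]
        ring
      · rw [if_neg (by omega), if_neg (by omega), if_neg (by intro hh; rw [hh] at hi; simp at hi)]
        ring
    rw [Finset.sum_congr rfl congr1, Finset.sum_ite_eq' Finset.univ]
    simp

lemma sum_shift (hn1 : 1 < n) (f : Fin n → ZMod p) :
    (∑ i : Fin n, f ⟨(i.1 + 1) % n, Nat.mod_lt _ (by omega)⟩) = ∑ i : Fin n, f i := by
  obtain ⟨m, rfl⟩ : ∃ m, n = m + 2 := ⟨n - 2, by omega⟩
  apply Fintype.sum_equiv (finRotate (m + 2))
  intro i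
  congr 1
  apply Fin.ext
  simp [finRotate_succ_apply, Fin.add_def]

lemma altSum_shift (hn : 0 < n) (he : Even n) (x : Fin n → ZMod p) :
    altSum p n (fun i => x ⟨(i.1 + 1) % n, Nat.mod_lt _ hn⟩) = - altSum p n x := by
  have hn1 : 1 < n := by
    rcases he with ⟨m, hm⟩; omega
  unfold altSum
  calc (∑ i : Fin n, (-1 : ZMod p) ^ (i.1 + 1) * x ⟨(i.1 + 1) % n, Nat.mod_lt _ hn⟩)
      = ∑ i : Fin n, (fun j : Fin n => (-1 : ZMod p) ^ (j.1) * x j) ⟨(i.1 + 1) % n, Nat.mod_lt _ hn⟩ := by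
        refine Finset.sum_congr rfl fun i _ => ?_
        simp only
        rw [neg_one_pow_mod he]
    _ = ∑ i : Fin n, (-1 : ZMod p) ^ (i.1) * x i := sum_shift hn1 (fun j : Fin n => (-1 : ZMod p) ^ (j.1) * x j)
    _ = - ∑ i : Fin n, (-1 : ZMod p) ^ (i.1 + 1) * x i := by
        rw [← Finset.sum_neg_distrib]
        refine Finset.sum_congr rfl fun i _ => ?_
        rw [pow_succ]; ring

lemma altSum_sign (he : Even n) : (∑ i : Fin n, (-1 : ZMod p) ^ (i.1 + 1)) = 0 := by
  have : (∑ i : Fin n, (-1 : ZMod p) ^ (i.1 + 1)) = ∑ i ∈ Finset.range n, (-1 : ZMod p) ^ (i + 1) :=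
    Fin.sum_univ_eq_sum_range (fun i => (-1 : ZMod p) ^ (i + 1)) n
  rw [this]
  have h2 : (∑ i ∈ Finset.range n, (-1 : ZMod p) ^ (i + 1)) = - ∑ i ∈ Finset.range n, (-1 : ZMod p) ^ i := by
    rw [← Finset.sum_neg_distrib]
    refine Finset.sum_congr rfl fun i _ => ?_
    rw [pow_succ]; ring
  rw [h2, neg_one_geom_sum, if_pos he, neg_zero]

lemma altSum_op2 (he : Even n) (c : ZMod p) {x : Fin n → ZMod p} (hx : altSum p n x = 0) :
    altSum p n (fun i => 2 * c - x i) = 0 := by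
  unfold altSum at *
  simp only
  have key : ∀ i ∈ Finset.univ, (-1 : ZMod p) ^ (i.1 + 1) * (2 * c - x i)
      = (-1 : ZMod p) ^ (i.1 + 1) * (2 * c) - (-1 : ZMod p) ^ (i.1 + 1) * x i := fun i _ => by ring
  rw [Finset.sum_congr rfl key, Finset.sum_sub_distrib, hx, sub_zero, ← Finset.sum_mul,
    altSum_sign he, zero_mul]

lemma altSum_op3 (hn1 : 1 < n) {x : Fin n → ZMod p} (hx : altSum p n x = 0) :
    altSum p n (fun i => if i.1 = 0 then x ⟨1, hn1⟩
      else if i.1 = 1 then 2 * x ⟨1, hn1⟩ - x ⟨0, by omega⟩ else x i) = 0 := by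
  unfold altSum at *
  rw [← hx, ← sub_eq_zero, ← Finset.sum_sub_distrib]
  have hsub : ({(⟨0, by omega⟩ : Fin n), ⟨1, hn1⟩} : Finset (Fin n)) ⊆ Finset.univ :=
    Finset.subset_univ _
  rw [← Finset.sum_subset hsub]
  · rw [Finset.sum_pair (by simp : (⟨0, by omega⟩ : Fin n) ≠ ⟨1, hn1⟩)]
    norm_num
    ring
  · intro i _ hi
    simp only [Finset.mem_insert, Finset.mem_singleton] at hi
    push_neg at hi
    obtain ⟨hi0, hi1⟩ := hi
    have h0 : ¬ i.1 = 0 := fun h => hi0 (Fin.ext h)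
    have h1 : ¬ i.1 = 1 := fun h => hi1 (Fin.ext h)
    simp [h0, h1]

end Aux


lemma back_aux {p n : ℕ} (hn : 0 < n) (a : Fin n → ZMod p) {t : DehnTuple p}
    (h : DehnEquiv p ⟨n, a⟩ t) :
    ∃ b : Fin n → ZMod p, t = ⟨n, b⟩ ∧ AEquiv p n (traMap p hn a) (traMap p hn b) := by
  induction h with
  | refl => exact ⟨a, rfl, Relation.ReflTransGen.refl⟩
  | tail hsteps hstep ih =>
    obtain ⟨b, rfl, hab⟩ := ih
    cases hstep with
    | op1 hn' he' =>
      refine ⟨_, rfl, Relation.ReflTransGen.tail hab ?_⟩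
      rw [traMap_dOp1 hn]
      exact AStep.op1 hn _
    | op2 hn' he' z =>
      refine ⟨_, rfl, ?_⟩
      rw [traMap_dOp2 hn he' z]
      exact hab
    | op3 hn' he' z =>
      refine ⟨_, rfl, Relation.ReflTransGen.tail hab ?_⟩
      rw [traMap_dOp3 hn z]
      exact AStep.op2 (b ⟨0, hn⟩ + z) _
    | op4 hn2 he' =>
      have hn1 : 1 < n := by omega
      refine ⟨_, rfl, Relation.ReflTransGen.tail hab ?_⟩
      rw [traMap_dOp4 hn hn1 hn2]
      exact AStep.op3 hn1 _

lemma fwd_aux {p n : ℕ} (hn : 0 < n) (he : Even n) {x z : Fin n → ZMod p}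
    (h : AEquiv p n x z) (hx : altSum p n x = 0) :
    altSum p n z = 0 ∧ DehnEquiv p ⟨n, tarMap p n x⟩ ⟨n, tarMap p n z⟩ := by
  have hn1 : 1 < n := by rcases he with ⟨m, hm⟩; omega
  induction h with
  | refl => exact ⟨hx, Relation.ReflTransGen.refl⟩
  | @tail b c hsteps hstep ih =>
    obtain ⟨hb, hd⟩ := ih
    cases hstep with
    | op1 hn' =>
      have hc : altSum p n (fun i => b ⟨(i.1 + 1) % n, Nat.mod_lt _ hn'⟩) = 0 := by
        rw [altSum_shift hn' he, hb, neg_zero]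
      refine ⟨hc, Relation.ReflTransGen.trans hd ?_⟩
      have heq : dOp2 hn 0 (dOp1 hn (tarMap p n b))
          = tarMap p n (fun i => b ⟨(i.1 + 1) % n, Nat.mod_lt _ hn'⟩) := by
        apply traMap_inj hn
        · rw [traMap_dOp2 hn he, traMap_dOp1 hn, traMap_tarMap hn he hb,
            traMap_tarMap hn he hc]
        · rw [dOp2_zero, tarMap_zero]
      exact Relation.ReflTransGen.tail
        (Relation.ReflTransGen.single (DehnStep.op1 hn he _))
        (heq ▸ DehnStep.op2 hn he 0 _)
    | op2 c0 =>
      have hc : altSum p n (fun i => 2 * c0 - b i) = 0 := altSum_op2 he c0 hb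
      refine ⟨hc, Relation.ReflTransGen.trans hd ?_⟩
      have heq : dOp2 hn 0 (dOp3 hn c0 (tarMap p n b))
          = tarMap p n (fun i => 2 * c0 - b i) := by
        apply traMap_inj hn
        · rw [traMap_dOp2 hn he, traMap_dOp3 hn, traMap_tarMap hn he hb,
            traMap_tarMap hn he hc, tarMap_zero]
          funext i
          ring
        · rw [dOp2_zero, tarMap_zero]
      exact Relation.ReflTransGen.tail
        (Relation.ReflTransGen.single (DehnStep.op3 hn he c0 _))
        (heq ▸ DehnStep.op2 hn he 0 _)
    | op3 hn' =>
      have hc : altSum p n (fun i => if i.1 = 0 then b ⟨1, hn'⟩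
          else if i.1 = 1 then 2 * b ⟨1, hn'⟩ - b ⟨0, by omega⟩ else b i) = 0 :=
        altSum_op3 hn' hb
      refine ⟨hc, Relation.ReflTransGen.trans hd ?_⟩
      by_cases h3 : 2 < n
      · have heq : dOp4 h3 (tarMap p n b)
            = tarMap p n (fun i => if i.1 = 0 then b ⟨1, hn'⟩
                else if i.1 = 1 then 2 * b ⟨1, hn'⟩ - b ⟨0, by omega⟩ else b i) := by
          apply traMap_inj hn
          · rw [traMap_dOp4 hn hn' h3, traMap_tarMap hn he hb, traMap_tarMap hn he hc]
          · rw [tarMap_zero]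
            simp [dOp4, tarMap]
        exact Relation.ReflTransGen.single (heq ▸ DehnStep.op4 h3 he _)
      · have hn2 : n = 2 := by omega
        subst hn2
        have hb' : b 1 = b 0 := by
          rw [altSum, Fin.sum_univ_two] at hb
          simp at hb
          linear_combination hb
        have hzb : (fun i : Fin 2 => if i.1 = 0 then b ⟨1, hn'⟩
            else if i.1 = 1 then 2 * b ⟨1, hn'⟩ - b ⟨0, by omega⟩ else b i) = b := by
          funext i
          fin_cases i
          · simpa using hb'
          · simp
            rw [hb']
            ring
        rw [hzb]

/-- for `x, y ∈ V_{p,n}^A` with `a = T_{A→R}(x)` and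
`b = T_{A→R}(y)`, one has `x ~^A y ↔ a ~ b`. -/
theorem aEquiv_iff_dehnEquiv (p n : ℕ) (hp : 2 ≤ p) (hn : 0 < n)
    (hne : Even n) (x y : Fin n → ZMod p)
    (hx : altSum p n x = 0) (hy : altSum p n y = 0) :
    AEquiv p n x y ↔ DehnEquiv p ⟨n, tarMap p n x⟩ ⟨n, tarMap p n y⟩ := by
  constructor
  · intro h
    exact (fwd_aux hn hne h hx).2
  · intro h
    obtain ⟨b, hb, hab⟩ := back_aux hn (tarMap p n x) h
    have hbb : b = tarMap p n y := by
      obtain ⟨h1, h2⟩ := Sigma.mk.inj_iff.mp hb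
      exact (eq_of_heq h2).symm
    rw [hbb, traMap_tarMap hn hne hx, traMap_tarMap hn hne hy] at hab
    exact hab
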